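/- Let φ₁, φ₂ : (0,∞) → ℝ be continuously differentiable such that for every t > 0 not both φ₁(t) = 0 and φ₂(t) = 0, and suppose 2·φ₁(t)·φ₂'(t) = φ₂(t)·φ₁'(t) for all t > 0. Then either φ₂(t) = 0 for all t > 0, or φ₂(t) ≠ 0 for all t > 0. -/

import Mathlib

/-- Dichotomy lemma from the totally geodesic fibers theorem: if `φ₁` and `φ₂` are `C¹` on
`(0,∞)`, never vanish simultaneously there, and satisfy `2 φ₁ φ₂' = φ₂ φ₁'`, then either
`φ₂` vanishes identically on `(0,∞)` or it never vanishes there. -/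
theorem phi2_dichotomy (φ₁ φ₂ : ℝ → ℝ)
    (h₁ : ContDiffOn ℝ 1 φ₁ (Set.Ioi 0))
    (h₂ : ContDiffOn ℝ 1 φ₂ (Set.Ioi 0))
    (hne : ∀ t : ℝ, 0 < t → ¬(φ₁ t = 0 ∧ φ₂ t = 0))
    (hode : ∀ t : ℝ, 0 < t → 2 * φ₁ t * deriv φ₂ t = φ₂ t * deriv φ₁ t) :
    (∀ t : ℝ, 0 < t → φ₂ t = 0) ∨ (∀ t : ℝ, 0 < t → φ₂ t ≠ 0) := by
  -- differentiability at points of (0,∞)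
  have hd₁ : ∀ t : ℝ, 0 < t → HasDerivAt φ₁ (deriv φ₁ t) t := fun t ht =>
    ((h₁.contDiffAt (Ioi_mem_nhds ht)).differentiableAt one_ne_zero).hasDerivAt
  have hd₂ : ∀ t : ℝ, 0 < t → HasDerivAt φ₂ (deriv φ₂ t) t := fun t ht =>
    ((h₂.contDiffAt (Ioi_mem_nhds ht)).differentiableAt one_ne_zero).hasDerivAt
  set Z : Set ℝ := {t | 0 < t ∧ φ₂ t = 0} with hZ
  set U : Set ℝ := {t | 0 < t ∧ φ₂ t ≠ 0} with hU
  -- U is open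
  have hUopen : IsOpen U := by
    rw [isOpen_iff_mem_nhds]
    rintro t ⟨ht, ht2⟩
    have hc : ContinuousAt φ₂ t :=
      ((h₂.contDiffAt (Ioi_mem_nhds ht)).differentiableAt one_ne_zero).continuousAt
    filter_upwards [hc.eventually_ne ht2, Ioi_mem_nhds ht] with s hs1 hs2
    exact ⟨hs2, hs1⟩
  -- Z is open
  have hZopen : IsOpen Z := by
    rw [isOpen_iff_mem_nhds]
    rintro t₀ ⟨ht₀, ht₀2⟩
    have h₁ne : φ₁ t₀ ≠ 0 := fun h => hne t₀ ht₀ ⟨h, ht₀2⟩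
    have hc : ContinuousAt φ₁ t₀ :=
      ((h₁.contDiffAt (Ioi_mem_nhds ht₀)).differentiableAt one_ne_zero).continuousAt
    obtain ⟨ε, hε, hball⟩ := Metric.mem_nhds_iff.1
      (Filter.inter_mem (hc.eventually_ne h₁ne) (Ioi_mem_nhds ht₀))
    have hconv : Convex ℝ (Metric.ball t₀ ε) := convex_ball t₀ ε
    -- g := φ₂² / φ₁ has zero derivative on the ball
    set g : ℝ → ℝ := fun t => φ₂ t ^ 2 / φ₁ t with hg
    have hder : ∀ t ∈ Metric.ball t₀ ε, HasDerivAt g 0 t := by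
      intro t ht
      obtain ⟨h1ne, htpos⟩ := hball ht
      have htp : (0:ℝ) < t := htpos
      have hdd := ((hd₂ t htp).pow 2).div (hd₁ t htp) h1ne
      refine hdd.congr_deriv (Eq.symm ?_)
      rw [eq_comm, div_eq_zero_iff]
      left
      push_cast
      simp only [pow_one, Pi.pow_apply]
      linear_combination φ₂ t * hode t htp
    have hconst : ∀ t ∈ Metric.ball t₀ ε, g t = g t₀ := by
      intro t ht
      have htm : t₀ ∈ Metric.ball t₀ ε := Metric.mem_ball_self hε
      refine hconv.is_const_of_fderivWithin_eq_zero (𝕜 := ℝ)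
        (fun s hs => ((hder s hs).differentiableAt).differentiableWithinAt) ?_ ht htm
      intro s hs
      rw [fderivWithin_of_isOpen Metric.isOpen_ball hs]
      have := (hder s hs).hasFDerivAt.fderiv
      rw [this]
      ext
      simp
    refine Filter.mem_of_superset (Metric.ball_mem_nhds t₀ hε) (fun t ht => ?_)
    obtain ⟨h1ne, htpos⟩ := hball ht
    refine ⟨htpos, ?_⟩
    have := hconst t ht
    rw [hg] at this
    simp only [ht₀2] at this
    have h0 : φ₂ t ^ 2 / φ₁ t = 0 := by simpa using this
    have := (div_eq_zero_iff.1 h0).resolve_right h1ne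
    exact pow_eq_zero_iff (n := 2) (by norm_num) |>.1 this
  -- dichotomy via connectedness of (0,∞)
  have hdisj : Disjoint Z U := by
    rw [Set.disjoint_left]
    rintro t ⟨_, h0⟩ ⟨_, hn⟩
    exact hn h0
  have hsub : Set.Ioi (0:ℝ) ⊆ Z ∪ U := by
    intro t ht
    by_cases h : φ₂ t = 0
    · exact Or.inl ⟨ht, h⟩
    · exact Or.inr ⟨ht, h⟩
  by_cases hzn : ∃ t : ℝ, 0 < t ∧ φ₂ t = 0
  · left
    obtain ⟨t, ht, ht2⟩ := hzn
    have hallZ : Set.Ioi (0:ℝ) ⊆ Z :=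
      (isPreconnected_Ioi).subset_left_of_subset_union hZopen hUopen hdisj hsub
        ⟨t, ht, ht, ht2⟩
    exact fun s hs => (hallZ hs).2
  · right
    push_neg at hzn
    exact fun t ht => hzn t ht
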